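/- Let N be a simply connected 2-step nilpotent Lie group and let a be an automorphism of N whose differential (as a linear map on the Lie algebra of N) has no eigenvalue equal to 1. Then for any x in N, there exists x₁ in N such that x₁ · x · a(x₁⁻¹) = 1; equivalently, the affine transformation (a,x) of N is conjugate by a left translation to (a,1). -/

import Mathlib

/-- A simply connected 2-step nilpotent Lie group is identified, via the
exponential map, with its Lie algebra `L` endowed with the Baker–Campbell–Hausdorff product
`x * y = x + y + (1/2)⁅x,y⁆` (inverse `-x`, identity `0`).  If `a` is an automorphism of the
group (equivalently of the Lie algebra) having no eigenvalue equal to `1`, then for every `x`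
there is `x₁` with `x₁ · x · a(x₁⁻¹) = 1`; i.e. the affine transformation `(a, x)` is conjugate
by a left translation to `(a, 1)`. -/
theorem stmt0 {L : Type*} [LieRing L] [LieAlgebra ℝ L] [FiniteDimensional ℝ L]
    (h2step : ∀ x y z : L, ⁅⁅x, y⁆, z⁆ = 0)
    (mul : L → L → L) (hmul : ∀ x y : L, mul x y = x + y + (2⁻¹ : ℝ) • ⁅x, y⁆)
    (a : L →ₗ⁅ℝ⁆ L) (ha : Function.Bijective a)
    (hev : ¬ Module.End.HasEigenvalue (a : L →ₗ[ℝ] L) 1)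
    (x : L) :
    ∃ x₁ : L, mul (mul x₁ x) (a (-x₁)) = 0 := by
  classical
  set A : L →ₗ[ℝ] L := (a : L →ₗ[ℝ] L) with hA
  -- the span of all brackets; it is central by the 2-step hypothesis
  set S : Submodule ℝ L := Submodule.span ℝ {z : L | ∃ u v : L, ⁅u, v⁆ = z} with hS
  have hbr : ∀ u v : L, ⁅u, v⁆ ∈ S := fun u v => Submodule.subset_span ⟨u, v, rfl⟩
  have hScentral : ∀ z ∈ S, ∀ w : L, ⁅z, w⁆ = 0 := by
    intro z hz
    induction hz using Submodule.span_induction with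
    | mem p hp => obtain ⟨u, v, rfl⟩ := hp; exact fun w => h2step u v w
    | zero => intro w; simp
    | add p q _ _ hp hq => intro w; rw [add_lie, hp w, hq w, add_zero]
    | smul t p _ hp => intro w; rw [smul_lie, hp w, smul_zero]
  have hScentral' : ∀ z ∈ S, ∀ w : L, ⁅w, z⁆ = 0 := by
    intro z hz w
    rw [← lie_skew, hScentral z hz w, neg_zero]
  -- the map T = a - id
  set T : L →ₗ[ℝ] L := A - LinearMap.id with hT
  have hTapply : ∀ z : L, T z = A z - z := fun z => rfl
  have hTinj : Function.Injective T := by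
    rw [← LinearMap.ker_eq_bot]
    have h1 : Module.End.eigenspace A 1 = ⊥ := by
      by_contra h
      exact hev (Module.End.hasEigenvalue_iff.mpr h)
    rw [Module.End.eigenspace_def, one_smul] at h1
    exact h1
  have hTsurj : Function.Surjective T := (LinearMap.injective_iff_surjective).mp hTinj
  -- both a and T map S into S
  have haS : ∀ z ∈ S, A z ∈ S := by
    intro z hz
    induction hz using Submodule.span_induction with
    | mem p hp =>
      obtain ⟨u, v, rfl⟩ := hp
      have : A ⁅u, v⁆ = ⁅A u, A v⁆ := a.map_lie u v
      rw [this]; exact hbr _ _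
    | zero => simp
    | add p q _ _ hp hq => rw [map_add]; exact Submodule.add_mem _ hp hq
    | smul t p _ hp => rw [map_smul]; exact Submodule.smul_mem _ _ hp
  have hTS : ∀ z ∈ S, T z ∈ S := by
    intro z hz
    rw [hTapply]
    exact Submodule.sub_mem _ (haS z hz) hz
  -- T restricts to a bijection of S
  let T' : S →ₗ[ℝ] S := T.restrict hTS
  have hT'inj : Function.Injective T' := by
    intro p q h
    exact Subtype.ext (hTinj (congrArg Subtype.val h))
  have hT'surj : Function.Surjective T' := (LinearMap.injective_iff_surjective).mp hT'inj
  -- solve T y₀ = x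
  obtain ⟨y₀, hy₀⟩ := hTsurj x
  -- the correction term
  have hBmem : (2⁻¹ : ℝ) • (⁅y₀, x⁆ - ⁅y₀, A y₀⁆ - ⁅x, A y₀⁆) ∈ S :=
    Submodule.smul_mem _ _
      (Submodule.sub_mem _ (Submodule.sub_mem _ (hbr _ _) (hbr _ _)) (hbr _ _))
  obtain ⟨c, hc⟩ := hT'surj ⟨_, hBmem⟩
  have hcS : (c : L) ∈ S := c.2
  have hacS : A (c : L) ∈ S := haS _ hcS
  have hTc : A (c : L) - (c : L) = (2⁻¹ : ℝ) • (⁅y₀, x⁆ - ⁅y₀, A y₀⁆ - ⁅x, A y₀⁆) := by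
    have := congrArg Subtype.val hc
    rw [← hTapply]
    exact this
  have hy₀' : A y₀ - y₀ = x := by rw [← hTapply]; exact hy₀
  refine ⟨y₀ + (c : L), ?_⟩
  have hAa : ∀ z : L, a z = A z := fun z => rfl
  rw [hmul, hmul, hAa, map_neg, map_add]
  -- expand brackets, killing everything involving central elements
  have hc1 : ∀ w : L, ⁅(c : L), w⁆ = 0 := hScentral _ hcS
  have hc2 : ∀ w : L, ⁅w, (c : L)⁆ = 0 := hScentral' _ hcS
  have hc3 : ∀ w : L, ⁅A (c : L), w⁆ = 0 := hScentral _ hacS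
  have hc4 : ∀ w : L, ⁅w, A (c : L)⁆ = 0 := hScentral' _ hacS
  have h2 : ∀ u v w : L, ⁅w, ⁅u, v⁆⁆ = 0 := by
    intro u v w; rw [← lie_skew, h2step, neg_zero]
  simp only [add_lie, lie_add, lie_neg, neg_lie, smul_lie, lie_smul, hc1, hc2, hc3, hc4,
    h2step, h2, smul_zero, add_zero, zero_add, neg_zero, neg_neg, smul_neg]
  -- now a purely linear identity, derived from hy₀' and hTc
  have e1 : A y₀ = y₀ + x := by rw [← hy₀']; abel
  have e2 : A (c : L) = (c : L) + (2⁻¹ : ℝ) • (⁅y₀, x⁆ - ⁅y₀, A y₀⁆ - ⁅x, A y₀⁆) := by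
    rw [← hTc]; abel
  rw [e2, e1]
  module
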